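/- Let d ≥ 1, let ω : Fin d → ℝ be injective, and let π be a probability vector on Fin d (π_x ≥ 0, Σ_x π_x = 1). Define the linear map ℰ on d×d complex matrices by ℰ(ρ)_{xx} := π_x·(Σ_y ρ_{yy}) for all x, and ℰ(ρ)_{xy} := √(π_x π_y)·ρ_{xy} for all x ≠ y. Then: (i) ℰ is trace-preserving and completely positive, i.e., its Choi matrix Σ_{x,y} ℰ(|x⟩⟨y|) ⊗ |x⟩⟨y| is positive semidefinite; (ii) ℰ is time-translation covariant: ⟨x'|ℰ(|x⟩⟨y|)|y'⟩ = 0 whenever ω_{x'} − ω_x ≠ ω_{y'} − ω_y; (iii) ℰ fixes diag(π) and maps every density matrix to one with populations π; and (iv) |ℰ(ρ)_{xy}| = √(π_x π_y)·|ρ_{xy}| for all x ≠ y, so ℰ preserves the fraction √(π_x π_y) of every coherence element. (Existence of a non-Markovian covariant channel sustaining coherence while relaxing populations to a fixed point.) -/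

import Mathlib

open Matrix Finset
open scoped ComplexOrder

/-- **A non-Markovian covariant channel sustaining coherence while relaxing populations.**
The map `ℰ` with `ℰ(ρ)_{xx} = π_x Tr ρ` and `ℰ(ρ)_{xy} = √(π_x π_y) ρ_{xy}` (for `x ≠ y`)
is trace-preserving and completely positive (its Choi matrix is positive semidefinite),
time-translation covariant, fixes `diag(π)` and maps every density matrix to one with
populations `π`, while preserving the fraction `√(π_x π_y)` of every coherence element. -/
theorem coherence_sustaining_covariant_channel
    (d : ℕ) (hd : 1 ≤ d) (ω : Fin d → ℝ) (hω : Function.Injective ω)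
    (pr : Fin d → ℝ) (hprnn : ∀ x, 0 ≤ pr x) (hprsum : ∑ x, pr x = 1)
    (E : Matrix (Fin d) (Fin d) ℂ → Matrix (Fin d) (Fin d) ℂ)
    (hE : ∀ ρ x y, E ρ x y =
      if x = y then ((pr x : ℝ) : ℂ) * ∑ z, ρ z z
      else ((Real.sqrt (pr x * pr y) : ℝ) : ℂ) * ρ x y) :
    (∀ ρ, (E ρ).trace = ρ.trace) ∧
    (Matrix.PosSemidef (Matrix.of fun p q : Fin d × Fin d =>
      E (Matrix.single p.2 q.2 (1 : ℂ)) p.1 q.1)) ∧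
    (∀ x' x y' y : Fin d, ω x' - ω x ≠ ω y' - ω y →
      E (Matrix.single x y (1 : ℂ)) x' y' = 0) ∧
    (E (Matrix.diagonal fun x => ((pr x : ℝ) : ℂ)) =
      Matrix.diagonal fun x => ((pr x : ℝ) : ℂ)) ∧
    (∀ ρ : Matrix (Fin d) (Fin d) ℂ, ρ.PosSemidef → ρ.trace = 1 →
      ∀ x, E ρ x x = ((pr x : ℝ) : ℂ)) ∧
    (∀ ρ : Matrix (Fin d) (Fin d) ℂ, ∀ x y, x ≠ y →
      ‖E ρ x y‖ = Real.sqrt (pr x * pr y) * ‖ρ x y‖) := by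
  have hstd : ∀ (a b i j : Fin d),
      Matrix.single a b (1 : ℂ) i j = if a = i ∧ b = j then 1 else 0 := fun _ _ _ _ => rfl
  have hdiagsum : ∀ a b : Fin d,
      (∑ z, Matrix.single a b (1 : ℂ) z z) = if a = b then 1 else 0 := by
    intro a b
    simp only [hstd]
    rcases eq_or_ne a b with rfl | h
    · simp
    · rw [if_neg h]
      refine Finset.sum_eq_zero fun z _ => ?_
      rw [if_neg]
      rintro ⟨rfl, rfl⟩
      exact h rfl
  have hsumC : (∑ z, ((pr z : ℝ) : ℂ)) = 1 := by
    have : (∑ z, ((pr z : ℝ) : ℂ)) = (((∑ z, pr z : ℝ)) : ℂ) := by push_cast; rfl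
    rw [this, hprsum, Complex.ofReal_one]
  have h2 : ∀ a c : Fin d, ((Real.sqrt (pr a * pr c) : ℝ) : ℂ)
      = ((Real.sqrt (pr a) : ℝ) : ℂ) * ((Real.sqrt (pr c) : ℝ) : ℂ) := by
    intro a c
    rw [Real.sqrt_mul (hprnn a)]
    push_cast; ring
  have h3 : ∀ a : Fin d, ((Real.sqrt (pr a) : ℝ) : ℂ) * ((Real.sqrt (pr a) : ℝ) : ℂ)
      = ((pr a : ℝ) : ℂ) := by
    intro a
    rw [← Complex.ofReal_mul, Real.mul_self_sqrt (hprnn a)]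
  refine ⟨?_, ?_, ?_, ?_, ?_, ?_⟩
  · -- trace preserving
    intro ρ
    simp only [Matrix.trace, Matrix.diag]
    calc ∑ x, E ρ x x = ∑ x, ((pr x : ℂ) * ∑ z, ρ z z) := by
          refine Finset.sum_congr rfl fun x _ => ?_
          rw [hE]; simp
      _ = (∑ x, (pr x : ℂ)) * ∑ z, ρ z z := by rw [Finset.sum_mul]
      _ = ∑ z, ρ z z := by rw [hsumC, one_mul]
  · -- Choi PSD
    set v : Matrix Unit (Fin d × Fin d) ℂ :=
      Matrix.of (fun _ p => if p.1 = p.2 then ((Real.sqrt (pr p.1) : ℝ) : ℂ) else 0) with hv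
    set Dm : Matrix (Fin d × Fin d) (Fin d × Fin d) ℂ :=
      Matrix.diagonal (fun p => if p.1 = p.2 then 0 else ((pr p.1 : ℝ) : ℂ)) with hD
    have key : (Matrix.of fun p q : Fin d × Fin d =>
        E (Matrix.single p.2 q.2 (1 : ℂ)) p.1 q.1) = vᴴ * v + Dm := by
      ext ⟨a, b⟩ ⟨c, e⟩
      have hmul : (vᴴ * v) (a, b) (c, e)
          = (starRingEnd ℂ) (v () (a, b)) * v () (c, e) := by
        simp [Matrix.mul_apply, Matrix.conjTranspose_apply]
      simp only [Matrix.of_apply, Matrix.add_apply, hmul, hv, hD, Matrix.diagonal_apply]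
      rw [hE, hdiagsum, hstd]
      by_cases hab : a = b <;> by_cases hce : c = e <;> by_cases hac : a = c <;>
        by_cases hbe : b = e <;>
        simp_all [Prod.ext_iff, Complex.conj_ofReal, h2, h3, mul_comm] <;>
        (intros; subst_vars; simp_all)
    rw [key]
    refine (Matrix.posSemidef_conjTranspose_mul_self v).add
      (Matrix.posSemidef_diagonal_iff.mpr fun p => ?_)
    by_cases h : p.1 = p.2
    · simp [h]
    · simp only [if_neg h]
      exact_mod_cast hprnn p.1
  · -- covariance
    intro x' x y' y hcov
    rw [hE, hdiagsum, hstd]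
    rcases eq_or_ne x' y' with rfl | h
    · have hxy : x ≠ y := by
        rintro rfl; exact hcov rfl
      simp [hxy]
    · rw [if_neg h]
      have : ¬ (x = x' ∧ y = y') := by
        rintro ⟨rfl, rfl⟩
        exact hcov (by ring)
      simp [this]
  · -- fixes diag
    ext x y
    rw [hE]
    rcases eq_or_ne x y with rfl | h
    · simp [hsumC]
    · simp [h, Matrix.diagonal_apply_ne _ h]
  · -- populations
    intro ρ _ htr x
    rw [hE]
    have : (∑ z, ρ z z) = 1 := htr
    simp [this]
  · -- coherence fraction
    intro ρ x y h
    rw [hE, if_neg h, norm_mul, Complex.norm_real, Real.norm_eq_abs,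
      abs_of_nonneg (Real.sqrt_nonneg _)]
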